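/- arXiv:1203.6792 — 2 statements merged into one kernel-verified Lean document; each statement's English description precedes it below -/
import Mathlib

section
/- For every Motzkin path γ of length n, the number of Motzkin paths of length n that cover γ in the Motzkin lattice M_n equals ω_HU(γ) + ω_DH(γ) + ω_DU(γ) + ω_HH(γ), and the number of Motzkin paths of length n covered by γ equals ω_UH(γ) + ω_HD(γ) + ω_UD(γ) + ω*_HH(γ), where ω_XY(γ) is the number of occurrences of the factor XY in γ and ω*_HH(γ) is the number of occurrences of HH whose height is at least 1. -/
/-- Steps of a (Grand) Motzkin path: up `U = (1,1)`, down `D = (1,-1)`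
and horizontal `H = (1,0)`. -/
inductive Step : Type
  | U : Step
  | D : Step
  | H : Step
  deriving DecidableEq

/-- The height of a path: number of up steps minus number of down steps. -/
def height (w : List Step) : ℤ := (w.count Step.U : ℤ) - (w.count Step.D : ℤ)

/-- A Motzkin path of length `n`: a word of length `n` with equally many up and down
steps, all of whose prefixes have nonnegative height. -/
def IsMotzkin (n : ℕ) (w : List Step) : Prop :=
  w.length = n ∧ w.count Step.U = w.count Step.D ∧ ∀ i : ℕ, 0 ≤ height (w.take i)

/-- A Grand Motzkin path of length `n`: a word of length `n` with equally many up
and down steps. -/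
def IsGrandMotzkin (n : ℕ) (w : List Step) : Prop :=
  w.length = n ∧ w.count Step.U = w.count Step.D

/-- The order on paths: pointwise comparison of the heights after each number of steps. -/
def PathLe (w w' : List Step) : Prop :=
  ∀ i : ℕ, height (w.take i) ≤ height (w'.take i)

/-- Strict order on paths. -/
def PathLt (w w' : List Step) : Prop := PathLe w w' ∧ ¬ PathLe w' w

/-- `Covers P w w'` : within the class of paths satisfying `P`, the path `w'` covers `w`,
i.e. `w < w'` and no path of the class lies strictly between them. -/
def Covers (P : List Step → Prop) (w w' : List Step) : Prop :=
  P w ∧ P w' ∧ PathLt w w' ∧ ∀ z : List Step, P z → ¬ (PathLt w z ∧ PathLt z w')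

/-- Number of occurrences of the factor `xy` in the word `w`. -/
def countFactor (x y : Step) (w : List Step) : ℕ :=
  ((Finset.range w.length).filter
    (fun i => w[i]? = some x ∧ w[i + 1]? = some y)).card

/-- Number of occurrences of the factor `xy` in the word `w` whose height
(the height after the first `i` steps, the factor occupying positions `i` and `i+1`,
`0`-indexed) is at least `1`. -/
def countFactorHigh (x y : Step) (w : List Step) : ℕ :=
  ((Finset.range w.length).filter
    (fun i => w[i]? = some x ∧ w[i + 1]? = some y ∧ 1 ≤ height (w.take i))).card

/-- The number of edges of the Hasse diagram of the Motzkin lattice `M_n`,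
i.e. the number of covering pairs of Motzkin paths of length `n`. -/
noncomputable def motzkinEdges (n : ℕ) : ℕ :=
  Nat.card {p : List Step × List Step // Covers (IsMotzkin n) p.1 p.2}

/-- The number of edges of the Hasse diagram of the Grand Motzkin lattice `GM_n`. -/
noncomputable def grandMotzkinEdges (n : ℕ) : ℕ :=
  Nat.card {p : List Step × List Step // Covers (IsGrandMotzkin n) p.1 p.2}

/-- The `n`-th Motzkin number: the number of Motzkin paths of length `n`. -/
noncomputable def motzkinNum (n : ℕ) : ℕ :=
  Nat.card {w : List Step // IsMotzkin n w}

/-- The `n`-th central trinomial coefficient: the coefficient of `x^n` in `(1+x+x²)^n`. -/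
noncomputable def centralTrinomial (n : ℕ) : ℕ :=
  (((1 : Polynomial ℕ) + Polynomial.X + Polynomial.X ^ 2) ^ n).coeff n

namespace MZ

def dval : Step → ℤ
  | Step.U => 1
  | Step.D => -1
  | Step.H => 0

def dvalo : Option Step → ℤ
  | none => 0
  | some s => dval s

lemma dval_inj {s t : Step} (h : dval s = dval t) : s = t := by
  cases s <;> cases t <;> simp_all [dval]

def hgt (w : List Step) (i : ℕ) : ℤ := height (w.take i)

lemma height_append (a b : List Step) : height (a ++ b) = height a + height b := by
  simp [height, List.count_append]; ring

lemma hgt_zero (w : List Step) : hgt w 0 = 0 := by simp [hgt, height]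

lemma hgt_succ (w : List Step) (k : ℕ) :
    hgt w (k+1) = hgt w k + dvalo (w[k]?) := by
  rw [hgt, List.take_succ, height_append, hgt]
  congr 1
  rcases h : w[k]? with _ | s
  · simp [h, dvalo, height]
  · clear h
    cases s <;> simp [dvalo, dval, height]

lemma hgt_sum (w : List Step) (k : ℕ) :
    hgt w k = ∑ j ∈ Finset.range k, dvalo (w[j]?) := by
  induction k with
  | zero => simp [hgt_zero]
  | succ k ih => rw [Finset.sum_range_succ, hgt_succ, ih]

lemma hgt_stable {w : List Step} {i : ℕ} (h : w.length ≤ i) : hgt w i = hgt w w.length := by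
  rw [hgt, hgt, List.take_of_length_le h, List.take_of_length_le le_rfl]

lemma ext_hgt {w w' : List Step} (hl : w.length = w'.length)
    (h : ∀ i, hgt w i = hgt w' i) : w = w' := by
  have hd : ∀ j : ℕ, dvalo (w[j]?) = dvalo (w'[j]?) := by
    intro j
    have h1 := hgt_succ w j
    have h2 := hgt_succ w' j
    have e1 := h j
    have e2 := h (j+1)
    omega
  apply List.ext_getElem?
  intro j
  by_cases hj : j < w.length
  · have hj' : j < w'.length := hl ▸ hj
    rw [List.getElem?_eq_getElem hj, List.getElem?_eq_getElem hj']
    have := hd j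
    rw [List.getElem?_eq_getElem hj, List.getElem?_eq_getElem hj'] at this
    exact congrArg _ (dval_inj this)
  · rw [List.getElem?_eq_none (by omega), List.getElem?_eq_none (by omega)]

end MZ

namespace MZ2
open MZ

lemma dvalo_set2 {γ : List Step} {i : ℕ} (hi : i + 1 < γ.length) (a b : Step) (j : ℕ) :
    dvalo (((γ.set i a).set (i+1) b)[j]?) =
      dvalo (γ[j]?) + (if j = i then dval a - dvalo (γ[i]?) else 0)
        + (if j = i+1 then dval b - dvalo (γ[i+1]?) else 0) := by
  by_cases h1 : j = i + 1
  · subst h1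
    rw [List.getElem?_set_self (by simp; omega), List.getElem?_eq_getElem hi]
    simp [dvalo]
  · rw [List.getElem?_set_ne (Ne.symm h1)]
    by_cases h2 : j = i
    · subst h2
      rw [List.getElem?_set_self (by omega), List.getElem?_eq_getElem (by omega)]
      simp [dvalo, h1]
    · rw [List.getElem?_set_ne (Ne.symm h2)]
      simp [h1, h2]

lemma hgt_set2 {γ : List Step} {i : ℕ} (hi : i + 1 < γ.length) (a b : Step) (k : ℕ) :
    hgt ((γ.set i a).set (i+1) b) k =
      hgt γ k + (if i < k then dval a - dvalo (γ[i]?) else 0)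
        + (if i + 1 < k then dval b - dvalo (γ[i+1]?) else 0) := by
  rw [hgt_sum, hgt_sum]
  simp only [dvalo_set2 hi]
  rw [Finset.sum_add_distrib, Finset.sum_add_distrib, Finset.sum_ite_eq' (Finset.range k),
    Finset.sum_ite_eq' (Finset.range k)]
  simp [Finset.mem_range]

end MZ2

namespace MZ3
open MZ MZ2

def raise : Step → Step
  | Step.U => Step.U
  | Step.H => Step.U
  | Step.D => Step.H

def lower : Step → Step
  | Step.U => Step.H
  | Step.H => Step.D
  | Step.D => Step.D

lemma dval_raise {s : Step} (h : dval s ≤ 0) : dval (raise s) = dval s + 1 := by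
  cases s <;> simp [raise, dval] at h ⊢

lemma dval_lower {s : Step} (h : 0 ≤ dval s) : dval (lower s) = dval s - 1 := by
  cases s <;> simp [lower, dval] at h ⊢

lemma dvalo_bounds (o : Option Step) : -1 ≤ dvalo o ∧ dvalo o ≤ 1 := by
  rcases o with _ | s
  · simp [dvalo]
  · cases s <;> simp [dvalo, dval]

def bumpUp (γ : List Step) (i : ℕ) : List Step :=
  (γ.set i (raise (γ.getD i Step.H))).set (i+1) (lower (γ.getD (i+1) Step.H))

def bumpDown (γ : List Step) (i : ℕ) : List Step :=
  (γ.set i (lower (γ.getD i Step.H))).set (i+1) (raise (γ.getD (i+1) Step.H))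

@[simp] lemma length_bumpUp (γ : List Step) (i : ℕ) : (bumpUp γ i).length = γ.length := by
  simp [bumpUp]

@[simp] lemma length_bumpDown (γ : List Step) (i : ℕ) : (bumpDown γ i).length = γ.length := by
  simp [bumpDown]

lemma get?_eq_some_getD {γ : List Step} {i : ℕ} (hi : i < γ.length) :
    γ[i]? = some (γ.getD i Step.H) := by
  rw [List.getElem?_eq_getElem hi, List.getD_eq_getElem γ _ hi]

lemma hgt_bumpUp {γ : List Step} {i : ℕ} (hi : i + 1 < γ.length)
    (ha : dvalo (γ[i]?) ≤ 0) (hb : 0 ≤ dvalo (γ[i+1]?)) (k : ℕ) :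
    hgt (bumpUp γ i) k = hgt γ k + (if k = i + 1 then 1 else 0) := by
  rw [bumpUp, hgt_set2 hi]
  rw [get?_eq_some_getD (by omega)] at ha ⊢
  rw [get?_eq_some_getD hi] at hb ⊢
  show hgt γ k + (if i < k then dval _ - dval _ else 0)
      + (if i + 1 < k then dval _ - dval _ else 0) = _
  rw [dval_raise ha, dval_lower hb]
  split_ifs <;> omega

lemma hgt_bumpDown {γ : List Step} {i : ℕ} (hi : i + 1 < γ.length)
    (ha : 0 ≤ dvalo (γ[i]?)) (hb : dvalo (γ[i+1]?) ≤ 0) (k : ℕ) :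
    hgt (bumpDown γ i) k = hgt γ k - (if k = i + 1 then 1 else 0) := by
  rw [bumpDown, hgt_set2 hi]
  rw [get?_eq_some_getD (by omega)] at ha ⊢
  rw [get?_eq_some_getD hi] at hb ⊢
  show hgt γ k + (if i < k then dval _ - dval _ else 0)
      + (if i + 1 < k then dval _ - dval _ else 0) = _
  rw [dval_lower ha, dval_raise hb]
  split_ifs <;> omega

lemma isMotzkin_iff {n : ℕ} {w : List Step} :
    IsMotzkin n w ↔ w.length = n ∧ hgt w n = 0 ∧ ∀ i, 0 ≤ hgt w i := by
  unfold IsMotzkin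
  constructor
  · rintro ⟨h1, h2, h3⟩
    refine ⟨h1, ?_, h3⟩
    rw [hgt, ← h1, List.take_of_length_le le_rfl, height, h2]
    ring
  · rintro ⟨h1, h2, h3⟩
    refine ⟨h1, ?_, h3⟩
    rw [hgt, ← h1, List.take_of_length_le le_rfl, height] at h2
    omega

lemma pathLe_iff {w w' : List Step} : PathLe w w' ↔ ∀ i, hgt w i ≤ hgt w' i := Iff.rfl

lemma not_pathLe_iff {w w' : List Step} : ¬ PathLe w' w ↔ ∃ i, hgt w i < hgt w' i := by
  rw [pathLe_iff]
  push_neg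
  rfl

end MZ3

namespace MZ4
open MZ MZ2 MZ3

lemma dvalo_hgt (w : List Step) (k : ℕ) : dvalo (w[k]?) = hgt w (k+1) - hgt w k := by
  rw [hgt_succ]; ring

lemma covers_up_iff {n : ℕ} {γ w : List Step} (hγ : IsMotzkin n γ) :
    Covers (IsMotzkin n) γ w ↔
      IsMotzkin n w ∧ ∃ j, ∀ k, hgt w k = hgt γ k + (if k = j then 1 else 0) := by
  obtain ⟨hγl, hγn, hγpos⟩ := isMotzkin_iff.mp hγ
  constructor
  · rintro ⟨-, hw, ⟨hle, hnle⟩, hmin⟩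
    refine ⟨hw, ?_⟩
    obtain ⟨hwl, hwn, hwpos⟩ := isMotzkin_iff.mp hw
    have hle' := pathLe_iff.mp hle
    -- the set of indices where heights differ
    have hne : ((Finset.range (n+1)).filter (fun j => hgt γ j < hgt w j)).Nonempty := by
      obtain ⟨i, hi⟩ := not_pathLe_iff.mp hnle
      by_cases hin : i ≤ n
      · exact ⟨i, Finset.mem_filter.mpr ⟨Finset.mem_range.mpr (by omega), hi⟩⟩
      · have e1 : hgt γ i = hgt γ n := by
          rw [hgt_stable (by omega), hγl]
        have e2 : hgt w i = hgt w n := by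
          rw [hgt_stable (by omega), hwl]
        exact ⟨n, Finset.mem_filter.mpr ⟨Finset.mem_range.mpr (by omega), by omega⟩⟩
    obtain ⟨j, hjS, hjmin⟩ := Finset.exists_min_image _ (fun j => hgt γ j) hne
    rw [Finset.mem_filter, Finset.mem_range] at hjS
    obtain ⟨hjn, hjlt⟩ := hjS
    have hj0 : j ≠ 0 := by
      intro h; rw [h, hgt_zero, hgt_zero] at hjlt; omega
    have hjn' : j ≠ n := by
      intro h; rw [h, hγn, hwn] at hjlt; omega
    obtain ⟨i, rfl⟩ : ∃ i, j = i + 1 := ⟨j - 1, by omega⟩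
    have hilen : i + 1 < γ.length := by omega
    have hmem : ∀ m, m ≤ n → hgt γ m < hgt w m → hgt γ (i+1) ≤ hgt γ m := by
      intro m hm hlt
      exact hjmin m (Finset.mem_filter.mpr ⟨Finset.mem_range.mpr (by omega), hlt⟩)
    have ha : dvalo (γ[i]?) ≤ 0 := by
      rw [dvalo_hgt]
      by_cases hc : hgt γ i < hgt w i
      · have := hmem i (by omega) hc; omega
      · have h1 := (dvalo_bounds (w[i]?)).2
        have h2 := dvalo_hgt w i
        have h3 := hle' i
        omega
    have hb : 0 ≤ dvalo (γ[i+1]?) := by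
      rw [dvalo_hgt]
      have en1 : hgt γ (i+1+1) = hgt γ (i+2) := rfl
      have en2 : hgt w (i+1+1) = hgt w (i+2) := rfl
      by_cases hc : hgt γ (i+2) < hgt w (i+2)
      · by_cases hn2 : i + 2 ≤ n
        · have := hmem (i+2) hn2 hc; omega
        · have e1 : hgt γ (i+2) = hgt γ n := by rw [hgt_stable (by omega), hγl]
          have := hγpos (i+1); omega
      · have h1 := (dvalo_bounds (w[i+1]?)).1
        have h2 := dvalo_hgt w (i+1)
        omega
    set z := bumpUp γ i with hz
    have hzh : ∀ k, hgt z k = hgt γ k + (if k = i + 1 then 1 else 0) :=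
      hgt_bumpUp hilen ha hb
    have hzM : IsMotzkin n z := by
      rw [isMotzkin_iff]
      refine ⟨by simp [hz, hγl], ?_, fun k => ?_⟩
      · rw [hzh n, if_neg hjn'.symm, hγn]; ring
      · have := hγpos k; rw [hzh k]; split_ifs <;> omega
    have hγz : PathLt γ z := by
      constructor
      · intro k; show hgt γ k ≤ hgt z k
        rw [hzh k]; split_ifs <;> omega
      · rw [not_pathLe_iff]
        exact ⟨i+1, by rw [hzh (i+1), if_pos rfl]; omega⟩
    have hzw : PathLe z w := by
      intro k; show hgt z k ≤ hgt w k
      rw [hzh k]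
      have := hle' k
      split_ifs with h
      · subst h; omega
      · omega
    have := hmin z hzM
    have hwz : PathLe w z := by
      by_contra hcon
      exact this ⟨hγz, hzw, hcon⟩
    refine ⟨i+1, fun k => ?_⟩
    rw [← hzh k]
    exact le_antisymm (hwz k) (hzw k)
  · rintro ⟨hw, j, hj⟩
    obtain ⟨hwl, hwn, hwpos⟩ := isMotzkin_iff.mp hw
    refine ⟨hγ, hw, ⟨?_, ?_⟩, ?_⟩
    · intro k; show hgt γ k ≤ hgt w k
      rw [hj k]; split_ifs <;> omega
    · rw [not_pathLe_iff]
      exact ⟨j, by rw [hj j, if_pos rfl]; omega⟩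
    · rintro z hz ⟨⟨h1, h2⟩, ⟨h3, h4⟩⟩
      obtain ⟨hzl, -, -⟩ := isMotzkin_iff.mp hz
      have h1' := pathLe_iff.mp h1
      have h3' := pathLe_iff.mp h3
      by_cases hcase : hgt z j = hgt γ j
      · apply h2
        have : z = γ := ext_hgt (by omega) (fun k => by
          have e1 := h1' k
          have e2 := h3' k
          have e3 := hj k
          by_cases hk : k = j
          · rw [hk]; exact hcase
          · rw [hj k, if_neg hk] at e2; omega)
        rw [this]
        exact fun k => le_rfl
      · apply h4
        have : z = w := ext_hgt (by omega) (fun k => by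
          have e1 := h1' k
          have e2 := h3' k
          have e3 := hj k
          by_cases hk : k = j
          · subst hk; rw [hj k, if_pos rfl] at e2 ⊢; omega
          · rw [hj k, if_neg hk] at e2 ⊢; omega)
        rw [this]
        exact fun k => le_rfl

end MZ4

namespace MZ5
open MZ MZ2 MZ3 MZ4

lemma covers_down_iff {n : ℕ} {γ w : List Step} (hγ : IsMotzkin n γ) :
    Covers (IsMotzkin n) w γ ↔
      IsMotzkin n w ∧ ∃ j, ∀ k, hgt w k = hgt γ k - (if k = j then 1 else 0) := by
  obtain ⟨hγl, hγn, hγpos⟩ := isMotzkin_iff.mp hγ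
  constructor
  · rintro ⟨hw, -, ⟨hle, hnle⟩, hmin⟩
    refine ⟨hw, ?_⟩
    obtain ⟨hwl, hwn, hwpos⟩ := isMotzkin_iff.mp hw
    have hle' := pathLe_iff.mp hle
    have hne : ((Finset.range (n+1)).filter (fun j => hgt w j < hgt γ j)).Nonempty := by
      obtain ⟨i, hi⟩ := not_pathLe_iff.mp hnle
      by_cases hin : i ≤ n
      · exact ⟨i, Finset.mem_filter.mpr ⟨Finset.mem_range.mpr (by omega), hi⟩⟩
      · have e1 : hgt γ i = hgt γ n := by rw [hgt_stable (by omega), hγl]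
        have e2 : hgt w i = hgt w n := by rw [hgt_stable (by omega), hwl]
        exact ⟨n, Finset.mem_filter.mpr ⟨Finset.mem_range.mpr (by omega), by omega⟩⟩
    obtain ⟨j, hjS, hjmax⟩ := Finset.exists_max_image _ (fun j => hgt γ j) hne
    rw [Finset.mem_filter, Finset.mem_range] at hjS
    obtain ⟨hjn, hjlt⟩ := hjS
    have hj0 : j ≠ 0 := by
      intro h; rw [h, hgt_zero, hgt_zero] at hjlt; omega
    have hjn' : j ≠ n := by
      intro h; rw [h, hγn, hwn] at hjlt; omega
    obtain ⟨i, rfl⟩ : ∃ i, j = i + 1 := ⟨j - 1, by omega⟩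
    have hilen : i + 1 < γ.length := by omega
    have hmem : ∀ m, m ≤ n → hgt w m < hgt γ m → hgt γ m ≤ hgt γ (i+1) := by
      intro m hm hlt
      exact hjmax m (Finset.mem_filter.mpr ⟨Finset.mem_range.mpr (by omega), hlt⟩)
    have ha : 0 ≤ dvalo (γ[i]?) := by
      rw [dvalo_hgt]
      by_cases hc : hgt w i < hgt γ i
      · have := hmem i (by omega) hc; omega
      · have h1 := (dvalo_bounds (w[i]?)).1
        have h2 := dvalo_hgt w i
        have h3 := hle' (i+1)
        omega
    have hb : dvalo (γ[i+1]?) ≤ 0 := by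
      rw [dvalo_hgt]
      have en1 : hgt γ (i+1+1) = hgt γ (i+2) := rfl
      have en2 : hgt w (i+1+1) = hgt w (i+2) := rfl
      by_cases hc : hgt w (i+2) < hgt γ (i+2)
      · by_cases hn2 : i + 2 ≤ n
        · have := hmem (i+2) hn2 hc; omega
        · have e1 : hgt γ (i+2) = hgt γ n := by rw [hgt_stable (by omega), hγl]
          have := hwpos (i+1); omega
      · have h1 := (dvalo_bounds (w[i+1]?)).2
        have h2 := dvalo_hgt w (i+1)
        omega
    set z := bumpDown γ i with hz
    have hzh : ∀ k, hgt z k = hgt γ k - (if k = i + 1 then 1 else 0) :=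
      hgt_bumpDown hilen ha hb
    have hzM : IsMotzkin n z := by
      rw [isMotzkin_iff]
      refine ⟨by simp [hz, hγl], ?_, fun k => ?_⟩
      · rw [hzh n, if_neg hjn'.symm, hγn]; ring
      · have h1 := hwpos k
        have h2 := hle' k
        rw [hzh k]; split_ifs with h
        · subst h; omega
        · have := hγpos k; omega
    have hzγ : PathLt z γ := by
      constructor
      · intro k; show hgt z k ≤ hgt γ k
        rw [hzh k]; split_ifs <;> omega
      · rw [not_pathLe_iff]
        exact ⟨i+1, by rw [hzh (i+1), if_pos rfl]; omega⟩
    have hwz : PathLe w z := by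
      intro k; show hgt w k ≤ hgt z k
      rw [hzh k]
      have := hle' k
      split_ifs with h
      · subst h; omega
      · omega
    have := hmin z hzM
    have hzw : PathLe z w := by
      by_contra hcon
      exact this ⟨⟨hwz, hcon⟩, hzγ⟩
    refine ⟨i+1, fun k => ?_⟩
    rw [← hzh k]
    exact le_antisymm (hwz k) (hzw k)
  · rintro ⟨hw, j, hj⟩
    obtain ⟨hwl, hwn, hwpos⟩ := isMotzkin_iff.mp hw
    refine ⟨hw, hγ, ⟨?_, ?_⟩, ?_⟩
    · intro k; show hgt w k ≤ hgt γ k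
      rw [hj k]; split_ifs <;> omega
    · rw [not_pathLe_iff]
      exact ⟨j, by rw [hj j, if_pos rfl]; omega⟩
    · rintro z hz ⟨⟨h1, h2⟩, ⟨h3, h4⟩⟩
      obtain ⟨hzl, -, -⟩ := isMotzkin_iff.mp hz
      have h1' := pathLe_iff.mp h1
      have h3' := pathLe_iff.mp h3
      by_cases hcase : hgt z j = hgt γ j
      · apply h4
        have : z = γ := ext_hgt (by omega) (fun k => by
          have e1 := h1' k
          have e2 := h3' k
          have e3 := hj k
          by_cases hk : k = j
          · rw [hk]; exact hcase
          · rw [hj k, if_neg hk] at e1; omega)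
        rw [this]
        exact fun k => le_rfl
      · apply h2
        have : z = w := ext_hgt (by omega) (fun k => by
          have e1 := h1' k
          have e2 := h3' k
          have e3 := hj k
          by_cases hk : k = j
          · subst hk; rw [hj k, if_pos rfl] at e1 ⊢; omega
          · rw [hj k, if_neg hk] at e1 ⊢; omega)
        rw [this]
        exact fun k => le_rfl

end MZ5

namespace MZ6
open MZ MZ2 MZ3 MZ4 MZ5

lemma dvalo_nonpos_iff {γ : List Step} {i : ℕ} (hi : i < γ.length) :
    dvalo (γ[i]?) ≤ 0 ↔ (γ[i]? = some Step.H ∨ γ[i]? = some Step.D) := by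
  rw [get?_eq_some_getD hi]
  generalize (γ.getD i Step.H) = s
  cases s <;> simp [dvalo, dval]

lemma dvalo_nonneg_iff {γ : List Step} {i : ℕ} (hi : i < γ.length) :
    0 ≤ dvalo (γ[i]?) ↔ (γ[i]? = some Step.U ∨ γ[i]? = some Step.H) := by
  rw [get?_eq_some_getD hi]
  generalize (γ.getD i Step.H) = s
  cases s <;> simp [dvalo, dval]

lemma bumpUp_covers {n : ℕ} {γ : List Step} (hγ : IsMotzkin n γ) {i : ℕ}
    (hi : i + 1 < γ.length) (ha : dvalo (γ[i]?) ≤ 0) (hb : 0 ≤ dvalo (γ[i+1]?)) :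
    Covers (IsMotzkin n) γ (bumpUp γ i) := by
  obtain ⟨hγl, hγn, hγpos⟩ := isMotzkin_iff.mp hγ
  rw [covers_up_iff hγ]
  have hzh := hgt_bumpUp hi ha hb
  refine ⟨?_, i+1, hzh⟩
  rw [isMotzkin_iff]
  refine ⟨by simp [hγl], ?_, fun k => ?_⟩
  · rw [hzh n, if_neg (by omega), hγn]; ring
  · have := hγpos k; rw [hzh k]; split_ifs <;> omega

lemma bumpDown_covers {n : ℕ} {γ : List Step} (hγ : IsMotzkin n γ) {i : ℕ}
    (hi : i + 1 < γ.length) (ha : 0 ≤ dvalo (γ[i]?)) (hb : dvalo (γ[i+1]?) ≤ 0)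
    (hh : 1 ≤ hgt γ (i+1)) :
    Covers (IsMotzkin n) (bumpDown γ i) γ := by
  obtain ⟨hγl, hγn, hγpos⟩ := isMotzkin_iff.mp hγ
  rw [covers_down_iff hγ]
  have hzh := hgt_bumpDown hi ha hb
  refine ⟨?_, i+1, hzh⟩
  rw [isMotzkin_iff]
  refine ⟨by simp [hγl], ?_, fun k => ?_⟩
  · rw [hzh n, if_neg (by omega), hγn]; ring
  · have := hγpos k; rw [hzh k]; split_ifs with h
    · subst h; omega
    · omega

lemma card_covers_up {n : ℕ} {γ : List Step} (hγ : IsMotzkin n γ) :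
    Nat.card {w : List Step // Covers (IsMotzkin n) γ w} =
      ((Finset.range γ.length).filter (fun i =>
        (γ[i]? = some Step.H ∨ γ[i]? = some Step.D) ∧
        (γ[i+1]? = some Step.U ∨ γ[i+1]? = some Step.H))).card := by
  obtain ⟨hγl, hγn, hγpos⟩ := isMotzkin_iff.mp hγ
  set s := ((Finset.range γ.length).filter (fun i =>
        (γ[i]? = some Step.H ∨ γ[i]? = some Step.D) ∧
        (γ[i+1]? = some Step.U ∨ γ[i+1]? = some Step.H))) with hs
  have hmem : ∀ i ∈ s, i + 1 < γ.length ∧ dvalo (γ[i]?) ≤ 0 ∧ 0 ≤ dvalo (γ[i+1]?) := by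
    intro i hi
    rw [hs, Finset.mem_filter, Finset.mem_range] at hi
    obtain ⟨hir, h1, h2⟩ := hi
    have hlt : i + 1 < γ.length := by
      rcases h2 with h2 | h2 <;>
        · rcases List.getElem?_eq_some_iff.mp h2 with ⟨h, -⟩; exact h
    exact ⟨hlt, (dvalo_nonpos_iff (by omega)).mpr h1, (dvalo_nonneg_iff hlt).mpr h2⟩
  let g : {i // i ∈ s} → {w : List Step // Covers (IsMotzkin n) γ w} := fun p =>
    ⟨bumpUp γ p.1, by
      obtain ⟨h1, h2, h3⟩ := hmem p.1 p.2
      exact bumpUp_covers hγ h1 h2 h3⟩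
  have hginj : Function.Injective g := by
    rintro ⟨i, hi⟩ ⟨i', hi'⟩ hgg
    obtain ⟨h1, h2, h3⟩ := hmem i hi
    obtain ⟨h1', h2', h3'⟩ := hmem i' hi'
    have e : bumpUp γ i = bumpUp γ i' := congrArg Subtype.val hgg
    by_contra hne
    have hne' : i ≠ i' := by simpa using hne
    have q1 := hgt_bumpUp h1 h2 h3 (i+1)
    have q2 := hgt_bumpUp h1' h2' h3' (i+1)
    rw [e, q2, if_pos rfl, if_neg (by omega)] at q1
    omega
  have hgsur : Function.Surjective g := by
    rintro ⟨w, hw⟩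
    rw [covers_up_iff hγ] at hw
    obtain ⟨hwM, j, hj⟩ := hw
    obtain ⟨hwl, hwn, hwpos⟩ := isMotzkin_iff.mp hwM
    have hj0 : j ≠ 0 := by
      intro h; subst h
      have := hj 0
      rw [hgt_zero, hgt_zero, if_pos rfl] at this
      omega
    have hjn : j < n := by
      by_contra hge
      push_neg at hge
      have e1 : hgt γ j = 0 := by rw [hgt_stable (by omega), hγl, hγn]
      have e2 : hgt w j = 0 := by rw [hgt_stable (by omega), hwl, hwn]
      have := hj j
      rw [if_pos rfl] at this
      omega
    obtain ⟨i, rfl⟩ : ∃ i, j = i + 1 := ⟨j - 1, by omega⟩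
    have hi1 : i + 1 < γ.length := by omega
    have ha : dvalo (γ[i]?) ≤ 0 := by
      have b1 := dvalo_hgt γ i
      have b2 := dvalo_hgt w i
      have bb := (dvalo_bounds (w[i]?)).2
      have e1 := hj i
      have e2 := hj (i+1)
      rw [if_neg (by omega)] at e1
      rw [if_pos rfl] at e2
      omega
    have hb : 0 ≤ dvalo (γ[i+1]?) := by
      have b1 := dvalo_hgt γ (i+1)
      have b2 := dvalo_hgt w (i+1)
      have bb := (dvalo_bounds (w[i+1]?)).1
      have e2 := hj (i+1)
      have e3 := hj (i+1+1)
      rw [if_pos rfl] at e2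
      rw [if_neg (by omega)] at e3
      omega
    have hmemi : i ∈ s := by
      rw [hs, Finset.mem_filter, Finset.mem_range]
      exact ⟨by omega, (dvalo_nonpos_iff (by omega)).mp ha, (dvalo_nonneg_iff hi1).mp hb⟩
    refine ⟨⟨i, hmemi⟩, ?_⟩
    apply Subtype.ext
    show bumpUp γ i = w
    apply ext_hgt (by simp [hwl, hγl])
    intro k
    rw [hgt_bumpUp hi1 ha hb k, hj k]
  calc Nat.card {w : List Step // Covers (IsMotzkin n) γ w}
      = Nat.card {i // i ∈ s} := (Nat.card_congr (Equiv.ofBijective g ⟨hginj, hgsur⟩)).symm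
    _ = s.card := Nat.card_eq_finsetCard s

lemma card_covers_down {n : ℕ} {γ : List Step} (hγ : IsMotzkin n γ) :
    Nat.card {w : List Step // Covers (IsMotzkin n) w γ} =
      ((Finset.range γ.length).filter (fun i =>
        (γ[i]? = some Step.U ∨ γ[i]? = some Step.H) ∧
        (γ[i+1]? = some Step.D ∨ γ[i+1]? = some Step.H) ∧
        1 ≤ hgt γ (i+1))).card := by
  obtain ⟨hγl, hγn, hγpos⟩ := isMotzkin_iff.mp hγ
  set s := ((Finset.range γ.length).filter (fun i =>
        (γ[i]? = some Step.U ∨ γ[i]? = some Step.H) ∧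
        (γ[i+1]? = some Step.D ∨ γ[i+1]? = some Step.H) ∧
        1 ≤ hgt γ (i+1))) with hs
  have hmem : ∀ i ∈ s, i + 1 < γ.length ∧ 0 ≤ dvalo (γ[i]?) ∧ dvalo (γ[i+1]?) ≤ 0
      ∧ 1 ≤ hgt γ (i+1) := by
    intro i hi
    rw [hs, Finset.mem_filter, Finset.mem_range] at hi
    obtain ⟨hir, h1, h2, h3⟩ := hi
    have hlt : i + 1 < γ.length := by
      rcases h2 with h2 | h2 <;>
        · rcases List.getElem?_eq_some_iff.mp h2 with ⟨h, -⟩; exact h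
    exact ⟨hlt, (dvalo_nonneg_iff (by omega)).mpr h1, (dvalo_nonpos_iff hlt).mpr h2.symm, h3⟩
  let g : {i // i ∈ s} → {w : List Step // Covers (IsMotzkin n) w γ} := fun p =>
    ⟨bumpDown γ p.1, by
      obtain ⟨h1, h2, h3, h4⟩ := hmem p.1 p.2
      exact bumpDown_covers hγ h1 h2 h3 h4⟩
  have hginj : Function.Injective g := by
    rintro ⟨i, hi⟩ ⟨i', hi'⟩ hgg
    obtain ⟨h1, h2, h3, h4⟩ := hmem i hi
    obtain ⟨h1', h2', h3', h4'⟩ := hmem i' hi'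
    have e : bumpDown γ i = bumpDown γ i' := congrArg Subtype.val hgg
    by_contra hne
    have hne' : i ≠ i' := by simpa using hne
    have q1 := hgt_bumpDown h1 h2 h3 (i+1)
    have q2 := hgt_bumpDown h1' h2' h3' (i+1)
    rw [e, q2, if_pos rfl, if_neg (by omega)] at q1
    omega
  have hgsur : Function.Surjective g := by
    rintro ⟨w, hw⟩
    rw [covers_down_iff hγ] at hw
    obtain ⟨hwM, j, hj⟩ := hw
    obtain ⟨hwl, hwn, hwpos⟩ := isMotzkin_iff.mp hwM
    have hj0 : j ≠ 0 := by
      intro h; subst h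
      have := hj 0
      rw [hgt_zero, hgt_zero, if_pos rfl] at this
      omega
    have hjn : j < n := by
      by_contra hge
      push_neg at hge
      have e1 : hgt γ j = 0 := by rw [hgt_stable (by omega), hγl, hγn]
      have e2 : hgt w j = 0 := by rw [hgt_stable (by omega), hwl, hwn]
      have := hj j
      rw [if_pos rfl] at this
      omega
    obtain ⟨i, rfl⟩ : ∃ i, j = i + 1 := ⟨j - 1, by omega⟩
    have hi1 : i + 1 < γ.length := by omega
    have ha : 0 ≤ dvalo (γ[i]?) := by
      have b1 := dvalo_hgt γ i
      have b2 := dvalo_hgt w i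
      have bb := (dvalo_bounds (w[i]?)).1
      have e1 := hj i
      have e2 := hj (i+1)
      rw [if_neg (by omega)] at e1
      rw [if_pos rfl] at e2
      omega
    have hb : dvalo (γ[i+1]?) ≤ 0 := by
      have b1 := dvalo_hgt γ (i+1)
      have b2 := dvalo_hgt w (i+1)
      have bb := (dvalo_bounds (w[i+1]?)).2
      have e2 := hj (i+1)
      have e3 := hj (i+1+1)
      rw [if_pos rfl] at e2
      rw [if_neg (by omega)] at e3
      omega
    have hh : 1 ≤ hgt γ (i+1) := by
      have := hj (i+1)
      rw [if_pos rfl] at this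
      have := hwpos (i+1)
      omega
    have hmemi : i ∈ s := by
      rw [hs, Finset.mem_filter, Finset.mem_range]
      exact ⟨by omega, (dvalo_nonneg_iff (by omega)).mp ha, ((dvalo_nonpos_iff hi1).mp hb).symm, hh⟩
    refine ⟨⟨i, hmemi⟩, ?_⟩
    apply Subtype.ext
    show bumpDown γ i = w
    apply ext_hgt (by simp [hwl, hγl])
    intro k
    rw [hgt_bumpDown hi1 ha hb k, hj k]
  calc Nat.card {w : List Step // Covers (IsMotzkin n) w γ}
      = Nat.card {i // i ∈ s} := (Nat.card_congr (Equiv.ofBijective g ⟨hginj, hgsur⟩)).symm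
    _ = s.card := Nat.card_eq_finsetCard s

end MZ6

namespace MZ7
open MZ MZ2 MZ3 MZ4 MZ5 MZ6

lemma disjF (γ : List Step) (x y x' y' : Step) (h : ¬(x = x' ∧ y = y'))
    (P Q : ℕ → Prop) [DecidablePred P] [DecidablePred Q]
    (hP : ∀ i, P i → γ[i]? = some x ∧ γ[i+1]? = some y)
    (hQ : ∀ i, Q i → γ[i]? = some x' ∧ γ[i+1]? = some y') :
    Disjoint ((Finset.range γ.length).filter P) ((Finset.range γ.length).filter Q) := by
  rw [Finset.disjoint_left]
  intro a ha hb
  rw [Finset.mem_filter] at ha hb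
  obtain ⟨a1, a2⟩ := hP a ha.2
  obtain ⟨b1, b2⟩ := hQ a hb.2
  exact h ⟨Option.some_inj.mp (a1.symm.trans b1), Option.some_inj.mp (a2.symm.trans b2)⟩

lemma key_step (γ : List Step) (i : ℕ) (s : Step) (h : γ[i]? = some s) :
    hgt γ (i+1) = hgt γ i + dval s := by
  rw [hgt_succ, h]; rfl

lemma up_count {γ : List Step} :
    ((Finset.range γ.length).filter (fun i =>
        (γ[i]? = some Step.H ∨ γ[i]? = some Step.D) ∧
        (γ[i+1]? = some Step.U ∨ γ[i+1]? = some Step.H))).card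
    = countFactor Step.H Step.U γ + countFactor Step.D Step.H γ +
        countFactor Step.D Step.U γ + countFactor Step.H Step.H γ := by
  classical
  have hiff : ∀ i ∈ Finset.range γ.length,
      (((γ[i]? = some Step.H ∨ γ[i]? = some Step.D) ∧
        (γ[i+1]? = some Step.U ∨ γ[i+1]? = some Step.H))) ↔
      (((γ[i]? = some Step.H ∧ γ[i+1]? = some Step.U) ∨
        (γ[i]? = some Step.D ∧ γ[i+1]? = some Step.H)) ∨
       ((γ[i]? = some Step.D ∧ γ[i+1]? = some Step.U) ∨
        (γ[i]? = some Step.H ∧ γ[i+1]? = some Step.H))) := by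
    intro i _
    tauto
  rw [Finset.filter_congr hiff]
  simp only [Finset.filter_or]
  have d12 := disjF γ Step.H Step.U Step.D Step.H (by simp) _ _
    (fun i h => h) (fun i h => h)
  have d34 := disjF γ Step.D Step.U Step.H Step.H (by simp) _ _
    (fun i h => h) (fun i h => h)
  have d13 := disjF γ Step.H Step.U Step.D Step.U (by simp) _ _
    (fun i h => h) (fun i h => h)
  have d14 := disjF γ Step.H Step.U Step.H Step.H (by simp) _ _
    (fun i h => h) (fun i h => h)
  have d23 := disjF γ Step.D Step.H Step.D Step.U (by simp) _ _
    (fun i h => h) (fun i h => h)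
  have d24 := disjF γ Step.D Step.H Step.H Step.H (by simp) _ _
    (fun i h => h) (fun i h => h)
  have douter : Disjoint
      (((Finset.range γ.length).filter (fun i => γ[i]? = some Step.H ∧ γ[i+1]? = some Step.U)) ∪
       ((Finset.range γ.length).filter (fun i => γ[i]? = some Step.D ∧ γ[i+1]? = some Step.H)))
      (((Finset.range γ.length).filter (fun i => γ[i]? = some Step.D ∧ γ[i+1]? = some Step.U)) ∪
       ((Finset.range γ.length).filter (fun i => γ[i]? = some Step.H ∧ γ[i+1]? = some Step.H))) := by
    simp only [Finset.disjoint_union_left, Finset.disjoint_union_right]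
    exact ⟨⟨d13, d23⟩, ⟨d14, d24⟩⟩
  rw [Finset.card_union_of_disjoint douter, Finset.card_union_of_disjoint d12,
    Finset.card_union_of_disjoint d34]
  simp only [countFactor]
  ring

end MZ7

namespace MZ8
open MZ MZ2 MZ3 MZ4 MZ5 MZ6 MZ7

lemma down_count {n : ℕ} {γ : List Step} (hγ : IsMotzkin n γ) :
    ((Finset.range γ.length).filter (fun i =>
        (γ[i]? = some Step.U ∨ γ[i]? = some Step.H) ∧
        (γ[i+1]? = some Step.D ∨ γ[i+1]? = some Step.H) ∧
        1 ≤ hgt γ (i+1))).card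
    = countFactor Step.U Step.H γ + countFactor Step.H Step.D γ +
        countFactor Step.U Step.D γ + countFactorHigh Step.H Step.H γ := by
  classical
  have hγpos := (isMotzkin_iff.mp hγ).2.2
  have eU : dval Step.U = 1 := rfl
  have eD : dval Step.D = -1 := rfl
  have eH : dval Step.H = 0 := rfl
  have hiff : ∀ i ∈ Finset.range γ.length,
      ((γ[i]? = some Step.U ∨ γ[i]? = some Step.H) ∧
        (γ[i+1]? = some Step.D ∨ γ[i+1]? = some Step.H) ∧
        1 ≤ hgt γ (i+1)) ↔
      (((γ[i]? = some Step.U ∧ γ[i+1]? = some Step.H) ∨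
        (γ[i]? = some Step.H ∧ γ[i+1]? = some Step.D)) ∨
       ((γ[i]? = some Step.U ∧ γ[i+1]? = some Step.D) ∨
        (γ[i]? = some Step.H ∧ γ[i+1]? = some Step.H ∧ 1 ≤ height (γ.take i)))) := by
    intro i _
    have hp1 := hγpos i
    have hp2 := hγpos (i+2)
    have hen : hgt γ (i+1+1) = hgt γ (i+2) := rfl
    have htake : height (γ.take i) = hgt γ i := rfl
    constructor
    · rintro ⟨h1 | h1, h2 | h2, hh⟩
      · exact Or.inr (Or.inl ⟨h1, h2⟩)
      · exact Or.inl (Or.inl ⟨h1, h2⟩)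
      · exact Or.inl (Or.inr ⟨h1, h2⟩)
      · refine Or.inr (Or.inr ⟨h1, h2, ?_⟩)
        have := key_step γ i Step.H h1
        rw [eH] at this
        omega
    · rintro ((⟨h1, h2⟩ | ⟨h1, h2⟩) | (⟨h1, h2⟩ | ⟨h1, h2, hh⟩))
      · refine ⟨Or.inl h1, Or.inr h2, ?_⟩
        have := key_step γ i Step.U h1
        rw [eU] at this
        omega
      · refine ⟨Or.inr h1, Or.inl h2, ?_⟩
        have := key_step γ (i+1) Step.D h2
        rw [eD] at this
        omega
      · refine ⟨Or.inl h1, Or.inl h2, ?_⟩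
        have := key_step γ i Step.U h1
        rw [eU] at this
        omega
      · refine ⟨Or.inr h1, Or.inr h2, ?_⟩
        have := key_step γ i Step.H h1
        rw [eH] at this
        omega
  rw [Finset.filter_congr hiff]
  simp only [Finset.filter_or]
  have d12 := disjF γ Step.U Step.H Step.H Step.D (by simp) _ _
    (fun i h => h) (fun i h => h)
  have d34 := disjF γ Step.U Step.D Step.H Step.H (by simp)
    (fun i => γ[i]? = some Step.U ∧ γ[i+1]? = some Step.D)
    (fun i => γ[i]? = some Step.H ∧ γ[i+1]? = some Step.H ∧ 1 ≤ height (γ.take i))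
    (fun i h => h) (fun i h => ⟨h.1, h.2.1⟩)
  have d13 := disjF γ Step.U Step.H Step.U Step.D (by simp) _ _
    (fun i h => h) (fun i h => h)
  have d14 := disjF γ Step.U Step.H Step.H Step.H (by simp)
    (fun i => γ[i]? = some Step.U ∧ γ[i+1]? = some Step.H)
    (fun i => γ[i]? = some Step.H ∧ γ[i+1]? = some Step.H ∧ 1 ≤ height (γ.take i))
    (fun i h => h) (fun i h => ⟨h.1, h.2.1⟩)
  have d23 := disjF γ Step.H Step.D Step.U Step.D (by simp) _ _
    (fun i h => h) (fun i h => h)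
  have d24 := disjF γ Step.H Step.D Step.H Step.H (by simp)
    (fun i => γ[i]? = some Step.H ∧ γ[i+1]? = some Step.D)
    (fun i => γ[i]? = some Step.H ∧ γ[i+1]? = some Step.H ∧ 1 ≤ height (γ.take i))
    (fun i h => h) (fun i h => ⟨h.1, h.2.1⟩)
  have douter : Disjoint
      (((Finset.range γ.length).filter (fun i => γ[i]? = some Step.U ∧ γ[i+1]? = some Step.H)) ∪
       ((Finset.range γ.length).filter (fun i => γ[i]? = some Step.H ∧ γ[i+1]? = some Step.D)))
      (((Finset.range γ.length).filter (fun i => γ[i]? = some Step.U ∧ γ[i+1]? = some Step.D)) ∪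
       ((Finset.range γ.length).filter (fun i => γ[i]? = some Step.H ∧ γ[i+1]? = some Step.H ∧ 1 ≤ height (γ.take i)))) := by
    simp only [Finset.disjoint_union_left, Finset.disjoint_union_right]
    exact ⟨⟨d13, d23⟩, ⟨d14, d24⟩⟩
  rw [Finset.card_union_of_disjoint douter, Finset.card_union_of_disjoint d12,
    Finset.card_union_of_disjoint d34]
  simp only [countFactor, countFactorHigh]
  ring

end MZ8

/-- In the Motzkin lattice `M_n`, the number of paths covering a Motzkin path `γ` equals
`ω_HU(γ) + ω_DH(γ) + ω_DU(γ) + ω_HH(γ)`, and the number of paths covered by `γ` equals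
`ω_UH(γ) + ω_HD(γ) + ω_UD(γ) + ω*_HH(γ)`, where `ω_XY` counts occurrences of the factor
`XY` and `ω*_HH` counts occurrences of `HH` at height at least `1`. -/
theorem motzkin_delta_nabla (n : ℕ) (γ : List Step) (hγ : IsMotzkin n γ) :
    Nat.card {w : List Step // Covers (IsMotzkin n) γ w} =
      countFactor Step.H Step.U γ + countFactor Step.D Step.H γ +
        countFactor Step.D Step.U γ + countFactor Step.H Step.H γ ∧
    Nat.card {w : List Step // Covers (IsMotzkin n) w γ} =
      countFactor Step.U Step.H γ + countFactor Step.H Step.D γ +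
        countFactor Step.U Step.D γ + countFactorHigh Step.H Step.H γ := by
  
  constructor
  · rw [MZ6.card_covers_up hγ]
    exact MZ7.up_count
  · rw [MZ6.card_covers_down hγ]
    exact MZ8.down_count hγ
end

section
/- For every natural number n, the number ℓ(GF_n) of covering pairs in the Grand Fibonacci poset GF_n satisfies, as integers, 27·ℓ(GF_n) = (3n−1)·2^{n+1} + 2·(3n+1)·(−1)^n. -/
/-- A Grand Fibonacci path of length `n`: a word of length `n` with equally many up and
down steps, whose prefix heights all lie in `{-1,0,1}` and whose horizontal steps all
occur at height `0`. -/
def IsGrandFibonacci (n : ℕ) (w : List Step) : Prop :=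
  w.length = n ∧ w.count Step.U = w.count Step.D ∧
    (∀ i : ℕ, -1 ≤ height (w.take i) ∧ height (w.take i) ≤ 1) ∧
    (∀ i : ℕ, w[i]? = some Step.H → height (w.take i) = 0)

/-- The number of edges of the Hasse diagram of the Grand Fibonacci poset `GF_n`,
i.e. the number of covering pairs of Grand Fibonacci paths of length `n`. -/
noncomputable def grandFibonacciEdges (n : ℕ) : ℕ :=
  Nat.card {p : List Step × List Step // Covers (IsGrandFibonacci n) p.1 p.2}

-- ## basic height machinery

def ht (w : List Step) (i : ℕ) : ℤ := height (w.take i)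

def sval : Step → ℤ
  | .U => 1
  | .D => -1
  | .H => 0

lemma height_append (u v : List Step) : height (u ++ v) = height u + height v := by
  simp [height, List.count_append]; ring

lemma ht_zero (w : List Step) : ht w 0 = 0 := by simp [ht, height]

lemma ht_append (u v : List Step) (j : ℕ) :
    ht (u ++ v) j = ht u j + ht v (j - u.length) := by
  rw [ht, List.take_append, height_append]; rfl

lemma ht_take (w : List Step) (k j : ℕ) : ht (w.take k) j = ht w (min j k) := by
  rw [ht, List.take_take]; rfl

lemma ht_of_length_le (w : List Step) {i : ℕ} (h : w.length ≤ i) : ht w i = height w := by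
  rw [ht, List.take_of_length_le h]

lemma ht_length (w : List Step) : ht w w.length = height w := ht_of_length_le w le_rfl

lemma ht_nil (m : ℕ) : ht ([] : List Step) m = 0 := by simp [ht, height]

lemma ht_drop (w : List Step) (k j : ℕ) :
    ht (w.drop k) j = ht w (k + j) - ht w k := by
  rcases le_or_gt k w.length with hk | hk
  · conv_rhs => rw [← List.take_append_drop k w]
    rw [ht_append, ht_append, ht_take, ht_take]
    have hl : (w.take k).length = k := by simp [List.length_take]; omega
    rw [hl]
    have h1 : min (k + j) k = k := by omega
    have h2 : min k k = k := by omega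
    have h3 : k + j - k = j := by omega
    have h4 : k - k = 0 := by omega
    rw [h1, h2, h3, h4, ht_zero]; ring
  · have hd : w.drop k = [] := List.drop_eq_nil_of_le hk.le
    rw [hd, ht_nil, ht_of_length_le w (by omega), ht_of_length_le w (by omega)]
    ring

lemma exists_get? {w : List Step} {i : ℕ} (hi : i < w.length) :
    ∃ s, w[i]? = some s := by
  cases h : w[i]? with
  | none => exact absurd (List.getElem?_eq_none_iff.mp h) (by omega)
  | some s => exact ⟨s, rfl⟩

lemma ht_succ {w : List Step} {i : ℕ} {s : Step} (h : w[i]? = some s) :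
    ht w (i + 1) = ht w i + sval s := by
  have h' : w[i]? = some s := h
  rw [ht, List.take_succ, h', height_append]
  cases s <;> simp [height, sval, ht]

lemma ht_stab {w : List Step} {i : ℕ} (h : w[i]? = none) :
    ht w (i + 1) = ht w i := by
  have hi : w.length ≤ i := List.getElem?_eq_none_iff.mp h
  rw [ht_of_length_le w hi, ht_of_length_le w (by omega)]

lemma sval_inj : ∀ {s t : Step}, sval s = sval t → s = t := by
  intro s t h; cases s <;> cases t <;> simp_all [sval]

lemma eq_of_ht_eq {w w' : List Step} (hlen : w.length = w'.length)
    (h : ∀ i, ht w i = ht w' i) : w = w' := by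
  apply List.ext_getElem?
  intro i
  rcases Nat.lt_or_ge i w.length with hi | hi
  · obtain ⟨s, hs⟩ := exists_get? hi
    obtain ⟨t, htt⟩ := exists_get? (show i < w'.length by omega)
    rw [hs, htt]
    have e1 := ht_succ hs
    have e2 := ht_succ htt
    have : sval s = sval t := by rw [h i, h (i+1)] at e1; omega
    rw [sval_inj this]
  · rw [List.getElem?_eq_none_iff.mpr hi, List.getElem?_eq_none_iff.mpr (by omega)]

-- ## Grand Fibonacci basic lemmas

lemma height_eq_zero_iff {w : List Step} :
    w.count Step.U = w.count Step.D ↔ height w = 0 := by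
  unfold height; omega

lemma IsGrandFibonacci.len {n w} (h : IsGrandFibonacci n w) : w.length = n := h.1

lemma IsGrandFibonacci.ht_total {n w} (h : IsGrandFibonacci n w) {i : ℕ} (hi : n ≤ i) : ht w i = 0 := by
  have hl := h.1
  rw [ht_of_length_le w (by omega)]
  exact height_eq_zero_iff.mp h.2.1

lemma IsGrandFibonacci.lb {n w} (h : IsGrandFibonacci n w) (i : ℕ) : -1 ≤ ht w i := (h.2.2.1 i).1
lemma IsGrandFibonacci.ub {n w} (h : IsGrandFibonacci n w) (i : ℕ) : ht w i ≤ 1 := (h.2.2.1 i).2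

lemma IsGrandFibonacci.hcond {n w} (h : IsGrandFibonacci n w) {i : ℕ} (hi : w[i]? = some Step.H) :
    ht w i = 0 := h.2.2.2 i hi

lemma IsGrandFibonacci.step_le {n w} (h : IsGrandFibonacci n w) (i : ℕ) :
    ht w i - 1 ≤ ht w (i+1) ∧ ht w (i+1) ≤ ht w i + 1 := by
  cases hs : w[i]? with
  | none => rw [ht_stab hs]; omega
  | some s => rw [ht_succ hs]; cases s <;> simp [sval] <;> omega

lemma IsGrandFibonacci.no_flat {n w} (h : IsGrandFibonacci n w) {i : ℕ} (hi : i < n)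
    (hf : ht w (i+1) = ht w i) : ht w i = 0 := by
  obtain ⟨s, hs⟩ := exists_get? (show i < w.length by have := h.1; omega)
  have := ht_succ hs
  have hsv : sval s = 0 := by omega
  have : s = Step.H := sval_inj (t := Step.H) (by simpa [sval] using hsv)
  exact h.hcond (this ▸ hs)

-- glue lemma
lemma IsGrandFibonacci.glue {a b u v} (hu : IsGrandFibonacci a u) (hv : IsGrandFibonacci b v) :
    IsGrandFibonacci (a + b) (u ++ v) := by
  have hu0 : height u = 0 := height_eq_zero_iff.mp hu.2.1
  have hv0 : height v = 0 := height_eq_zero_iff.mp hv.2.1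
  have hlen : u.length = a := hu.1
  have key : ∀ j, ht (u ++ v) j = ht u j + ht v (j - a) := by
    intro j; rw [ht_append, hlen]
  refine ⟨by simp [hu.1, hv.1], ?_, ?_, ?_⟩
  · apply height_eq_zero_iff.mpr
    rw [height_append, hu0, hv0]; ring
  · intro i
    show -1 ≤ ht (u ++ v) i ∧ ht (u ++ v) i ≤ 1
    rcases le_or_gt i a with hia | hia
    · have h0' : i - a = 0 := by omega
      rw [key i, h0', ht_zero]
      have := hu.lb i; have := hu.ub i
      constructor <;> omega
    · have : ht u i = 0 := hu.ht_total (by omega)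
      have hk := key i; rw [this] at hk
      constructor
      · have := hv.lb (i - a); omega
      · have := hv.ub (i - a); omega
  · intro i hi
    show ht (u ++ v) i = 0
    rcases Nat.lt_or_ge i a with hia | hia
    · have hg : u[i]? = some Step.H := by
        rwa [List.getElem?_append_left (by omega)] at hi
      have := hu.hcond hg
      rw [key i]
      have : i - a = 0 := by omega
      simp_all [ht_zero]
    · have hg : v[(i - a)]? = some Step.H := by
        rw [List.getElem?_append_right (show u.length ≤ i by omega)] at hi
        rwa [hlen] at hi
      have h1 := hv.hcond hg
      have h2 : ht u i = 0 := hu.ht_total (by omega)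
      rw [key i, h1, h2]; ring

lemma IsGrandFibonacci.take {n w} (h : IsGrandFibonacci n w) {k : ℕ} (hk : k ≤ n) (h0 : ht w k = 0) :
    IsGrandFibonacci k (w.take k) := by
  have hlen : w.length = n := h.1
  refine ⟨by simp [List.length_take]; omega, ?_, ?_, ?_⟩
  · apply height_eq_zero_iff.mpr
    have := ht_take w k k
    rw [min_self] at this
    rw [← ht_length]
    simpa [List.length_take, min_eq_left (show k ≤ w.length by omega)] using h0 ▸ this
  · intro i
    show -1 ≤ ht (w.take k) i ∧ ht (w.take k) i ≤ 1
    rw [ht_take]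
    exact ⟨h.lb _, h.ub _⟩
  · intro i hi
    have hik : i < k := by
      obtain ⟨hl, -⟩ := List.getElem?_eq_some_iff.mp hi
      simp [List.length_take] at hl
      omega
    rw [List.getElem?_take_of_lt hik] at hi
    show ht (w.take k) i = 0
    rw [ht_take]
    have : min i k = i := by omega
    rw [this]
    exact h.hcond hi

lemma IsGrandFibonacci.drop {n w} (h : IsGrandFibonacci n w) {k : ℕ} (h0 : ht w k = 0) :
    IsGrandFibonacci (n - k) (w.drop k) := by
  have hlen : w.length = n := h.1
  refine ⟨by simp [hlen], ?_, ?_, ?_⟩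
  · apply height_eq_zero_iff.mpr
    rw [← ht_length]
    have hdl : (w.drop k).length = n - k := by simp [hlen]
    rw [hdl, ht_drop, h0]
    rcases le_or_gt k n with hkn | hkn
    · rw [h.ht_total (show n ≤ k + (n - k) by omega)]; ring
    · rw [h.ht_total (show n ≤ k + (n - k) by omega)]; ring
  · intro i
    show -1 ≤ ht (w.drop k) i ∧ ht (w.drop k) i ≤ 1
    rw [ht_drop, h0]
    have := h.lb (k + i); have := h.ub (k + i); constructor <;> omega
  · intro i hi
    rw [List.getElem?_drop] at hi
    show ht (w.drop k) i = 0
    rw [ht_drop, h0, h.hcond hi]; ring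

-- ## small concrete GF paths

lemma isGF_pair {s t : Step} (hs : sval s + sval t = 0) (hs1 : -1 ≤ sval s) (hs2 : sval s ≤ 1)
    (hH : s = Step.H → True) : True := trivial

lemma ht_pair (s t : Step) (i : ℕ) :
    ht [s, t] i = if i = 0 then 0 else if i = 1 then sval s else sval s + sval t := by
  match i with
  | 0 => simp [ht_zero]
  | 1 =>
    have : ([s, t] : List Step)[0]? = some s := rfl
    rw [show (1:ℕ) = 0 + 1 from rfl, ht_succ this, ht_zero]
    simp
  | (k+2) =>
    have h0 : ([s, t] : List Step)[0]? = some s := rfl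
    have h1 : ([s, t] : List Step)[1]? = some t := rfl
    have e1 : ht [s,t] 1 = sval s := by
      rw [show (1:ℕ) = 0 + 1 from rfl, ht_succ h0, ht_zero]; simp
    have e2 : ht [s,t] 2 = sval s + sval t := by
      rw [show (2:ℕ) = 1 + 1 from rfl, ht_succ h1, e1]
    have : ht [s,t] (k+2) = ht [s,t] 2 := by
      rw [ht_of_length_le _ (by simp), ht_of_length_le _ (by simp)]
    simp [this, e2]

lemma isGF_HH : IsGrandFibonacci 2 [Step.H, Step.H] := by
  refine ⟨rfl, rfl, ?_, ?_⟩
  · intro i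
    show -1 ≤ ht [Step.H, Step.H] i ∧ ht [Step.H, Step.H] i ≤ 1
    rw [ht_pair]; split <;> [skip; split] <;> simp [sval]
  · intro i hi
    show ht [Step.H, Step.H] i = 0
    rw [ht_pair]
    have : i < 2 := by
      obtain ⟨hl, -⟩ := List.getElem?_eq_some_iff.mp hi
      simpa using hl
    interval_cases i <;> simp [sval]

lemma isGF_UD : IsGrandFibonacci 2 [Step.U, Step.D] := by
  refine ⟨rfl, rfl, ?_, ?_⟩
  · intro i
    show -1 ≤ ht [Step.U, Step.D] i ∧ ht [Step.U, Step.D] i ≤ 1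
    rw [ht_pair]; split <;> [skip; split] <;> simp [sval]
  · intro i hi
    exfalso
    have : i < 2 := by
      obtain ⟨hl, -⟩ := List.getElem?_eq_some_iff.mp hi
      simpa using hl
    interval_cases i <;> simp_all
  
lemma isGF_DU : IsGrandFibonacci 2 [Step.D, Step.U] := by
  refine ⟨rfl, rfl, ?_, ?_⟩
  · intro i
    show -1 ≤ ht [Step.D, Step.U] i ∧ ht [Step.D, Step.U] i ≤ 1
    rw [ht_pair]; split <;> [skip; split] <;> simp [sval]
  · intro i hi
    exfalso
    have : i < 2 := by
      obtain ⟨hl, -⟩ := List.getElem?_eq_some_iff.mp hi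
      simpa using hl
    interval_cases i <;> simp_all

-- decomposition of a word around two letters
lemma two_letter_decomp {w : List Step} {p : ℕ} {a b : Step}
    (ha : w[p]? = some a) (hb : w[(p+1)]? = some b) :
    w = w.take p ++ [a, b] ++ w.drop (p+2) := by
  have hp : p < w.length := (List.getElem?_eq_some_iff.mp ha).1
  have hp1 : p + 1 < w.length := (List.getElem?_eq_some_iff.mp hb).1
  have e1 : w.drop p = a :: w.drop (p+1) := by
    rw [List.drop_eq_getElem_cons hp]
    congr 1
    have := List.getElem?_eq_some_iff.mp ha
    obtain ⟨h, hget⟩ := this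
    simpa [List.getElem?_eq_getElem h] using ha
  have e2 : w.drop (p+1) = b :: w.drop (p+2) := by
    rw [List.drop_eq_getElem_cons hp1]
    congr 1
    obtain ⟨h, hget⟩ := List.getElem?_eq_some_iff.mp hb
    simpa [List.getElem?_eq_getElem h] using hb
  conv_lhs => rw [← List.take_append_drop p w, e1, e2]
  simp

-- ## Good positions and bumps

def GoodAt (n : ℕ) (w : List Step) (p : ℕ) : Prop :=
  IsGrandFibonacci n w ∧ p + 1 < n ∧ ht w p = 0 ∧
    ((w[p]? = some Step.D ∧ w[(p+1)]? = some Step.U) ∨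
     (w[p]? = some Step.H ∧ w[(p+1)]? = some Step.H))

def bump (w : List Step) (p : ℕ) : List Step :=
  w.take p ++ (if w[p]? = some Step.D then [Step.H, Step.H] else [Step.U, Step.D])
    ++ w.drop (p+2)

lemma ht_sandwich {u m : List Step} (v : List Step) {p : ℕ} (hu : u.length = p)
    (hm : m.length = 2) (j : ℕ) :
    ht (u ++ m ++ v) j = ht u j + (ht m (j - p) + ht v (j - p - 2)) := by
  rw [List.append_assoc, ht_append, ht_append, hu, hm]

lemma ht_bump {n w p} (h : GoodAt n w p) (j : ℕ) :
    ht (bump w p) j = ht w j + (if j = p+1 then 1 else 0) := by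
  obtain ⟨hgf, hpn, hp0, hpat⟩ := h
  have hlen : w.length = n := hgf.1
  have hup : (w.take p).length = p := by simp [List.length_take]; omega
  rcases hpat with ⟨h1, h2⟩ | ⟨h1, h2⟩
  · have hw : w = w.take p ++ [Step.D, Step.U] ++ w.drop (p+2) := two_letter_decomp h1 h2
    have hb : bump w p = w.take p ++ [Step.H, Step.H] ++ w.drop (p+2) := by
      unfold bump; rw [if_pos h1]
    rw [hb]
    conv_rhs => rw [hw]
    rw [ht_sandwich _ hup (by rfl), ht_sandwich _ hup (by rfl), ht_pair, ht_pair]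
    simp only [sval]
    split_ifs <;> omega
  · have hw : w = w.take p ++ [Step.H, Step.H] ++ w.drop (p+2) := two_letter_decomp h1 h2
    have hb : bump w p = w.take p ++ [Step.U, Step.D] ++ w.drop (p+2) := by
      unfold bump; rw [if_neg (by rw [h1]; simp)]
    rw [hb]
    conv_rhs => rw [hw]
    rw [ht_sandwich _ hup (by rfl), ht_sandwich _ hup (by rfl), ht_pair, ht_pair]
    simp only [sval]
    split_ifs <;> omega

lemma GoodAt.ht_p2 {n w p} (h : GoodAt n w p) : ht w (p+2) = 0 := by
  obtain ⟨hgf, hpn, hp0, hpat⟩ := h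
  rcases hpat with ⟨h1, h2⟩ | ⟨h1, h2⟩ <;>
    rw [show p+2 = (p+1)+1 from rfl, ht_succ h2, ht_succ h1] <;> simp [sval] <;> omega

lemma bump_isGF {n w p} (h : GoodAt n w p) : IsGrandFibonacci n (bump w p) := by
  obtain ⟨hgf, hpn, hp0, hpat⟩ := h
  have hlen : w.length = n := hgf.1
  have htake : IsGrandFibonacci p (w.take p) := hgf.take (by omega) hp0
  have hdrop : IsGrandFibonacci (n - (p+2)) (w.drop (p+2)) :=
    hgf.drop (GoodAt.ht_p2 ⟨hgf, hpn, hp0, hpat⟩)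
  have hmid : IsGrandFibonacci 2
      (if w[p]? = some Step.D then [Step.H, Step.H] else [Step.U, Step.D]) := by
    split
    · exact isGF_HH
    · exact isGF_UD
  have := (htake.glue hmid).glue hdrop
  have harith : p + 2 + (n - (p+2)) = n := by omega
  rw [harith] at this
  exact this

lemma PathLe_def {w w' : List Step} : PathLe w w' ↔ ∀ i, ht w i ≤ ht w' i := Iff.rfl

lemma covers_of_good {n w p} (h : GoodAt n w p) :
    Covers (IsGrandFibonacci n) w (bump w p) := by
  refine ⟨h.1, bump_isGF h, ⟨?_, ?_⟩, ?_⟩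
  · intro i
    show ht w i ≤ ht (bump w p) i
    rw [ht_bump h]
    split_ifs <;> omega
  · intro hle
    have h2 : ht (bump w p) (p+1) ≤ ht w (p+1) := hle (p+1)
    rw [ht_bump h, if_pos rfl] at h2
    omega
  · rintro z hz ⟨⟨hwz, hnzw⟩, ⟨hzb, hnbz⟩⟩
    have hz1 : ∀ j, ht w j ≤ ht z j := hwz
    have hz2 : ∀ j, ht z j ≤ ht (bump w p) j := hzb
    by_cases hmid : ht z (p+1) = ht w (p+1)
    · have hzw : z = w := by
        apply eq_of_ht_eq (by rw [hz.1, h.1.1])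
        intro j
        rcases eq_or_ne j (p+1) with rfl | hne
        · exact hmid
        · have a1 := hz2 j
          rw [ht_bump h, if_neg hne] at a1
          have a2 := hz1 j
          omega
      subst hzw
      exact hnzw (fun i => le_refl _)
    · have hzbump : z = bump w p := by
        apply eq_of_ht_eq (by rw [hz.1, (bump_isGF h).1])
        intro j
        rw [ht_bump h]
        rcases eq_or_ne j (p+1) with rfl | hne
        · rw [if_pos rfl]
          have a1 := hz1 (p+1)
          have a2 := hz2 (p+1)
          rw [ht_bump h, if_pos rfl] at a2
          omega
        · rw [if_neg hne]
          have a1 := hz1 j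
          have a2 := hz2 j
          rw [ht_bump h, if_neg hne] at a2
          omega
      subst hzbump
      exact hnbz (fun i => le_refl _)

-- ## every cover is a bump

lemma good_of_covers {n : ℕ} {w w' : List Step}
    (h : Covers (IsGrandFibonacci n) w w') :
    ∃ p, GoodAt n w p ∧ w' = bump w p := by
  obtain ⟨hw, hw', ⟨hle, hnle⟩, hmin⟩ := h
  have hle' : ∀ j, ht w j ≤ ht w' j := hle
  -- find a position where heights differ
  have hex : ∃ i, ht w i < ht w' i := by
    by_contra hc
    push_neg at hc
    exact hnle (fun i => hc i)
  set S := (Finset.range n).filter (fun i => ht w i < ht w' i) with hS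
  have hSne : S.Nonempty := by
    obtain ⟨i0, hi0⟩ := hex
    refine ⟨i0, Finset.mem_filter.mpr ⟨Finset.mem_range.mpr ?_, hi0⟩⟩
    by_contra hc
    rw [hw.ht_total (by omega), hw'.ht_total (by omega)] at hi0
    omega
  obtain ⟨i, hiS, himin⟩ := Finset.exists_min_image S (fun i => ht w i) hSne
  obtain ⟨hin, hilt⟩ := Finset.mem_filter.mp hiS
  rw [Finset.mem_range] at hin
  have himin' : ∀ j ∈ S, ht w i ≤ ht w j := himin
  -- i ≥ 1
  obtain ⟨p, rfl⟩ : ∃ p, i = p + 1 := by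
    cases i with
    | zero => rw [ht_zero, ht_zero] at hilt; omega
    | succ p => exact ⟨p, rfl⟩
  -- handy: membership helper
  have hmem : ∀ j, ht w j < ht w' j → ht w (p+1) ≤ ht w j := by
    intro j hj
    have hjn : j < n := by
      by_contra hc
      rw [hw.ht_total (by omega), hw'.ht_total (by omega)] at hj
      omega
    exact himin' j (Finset.mem_filter.mpr ⟨Finset.mem_range.mpr hjn, hj⟩)
  -- neighbors are ≥ v
  have hnb1 : ht w (p+1) ≤ ht w p := by
    by_contra hc
    push_neg at hc
    have hstep := hw.step_le p
    have hstep' := hw'.step_le p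
    have : ht w p < ht w' p := by
      have := hle' p; omega
    have := hmem p this
    omega
  have hnb2 : ht w (p+1) ≤ ht w (p+2) := by
    by_contra hc
    push_neg at hc
    have hstep := hw.step_le (p+1)
    have hstep' := hw'.step_le (p+1)
    rw [show p+1+1 = p+2 from by omega] at hstep hstep'
    have : ht w (p+2) < ht w' (p+2) := by
      have := hle' (p+2); omega
    have := hmem (p+2) this
    omega
  -- bounds
  have hub := hw.ub (p+1)
  have hlb := hw.lb (p+1)
  have hub' := hw'.ub (p+1)
  have hstep1 := hw.step_le p
  have hstep2 := hw.step_le (p+1)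
  rw [show p+1+1 = p+2 from by omega] at hstep2
  -- v ∈ {-1, 0}
  have hv : ht w (p+1) = -1 ∨ ht w (p+1) = 0 := by omega
  -- neighbors are exactly 0
  have hp0 : ht w p = 0 := by
    rcases hv with hv | hv
    · -- v = -1 : neighbor in {-1,0}; -1 excluded by flat-at-0 of w
      rcases (show ht w p = -1 ∨ ht w p = 0 by omega) with hc | hc
      · exfalso
        have := hw.no_flat (show p < n by omega) (by omega)
        omega
      · exact hc
    · -- v = 0 : neighbor in {0,1}; 1 excluded via w'
      rcases (show ht w p = 0 ∨ ht w p = 1 by omega) with hc | hc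
      · exact hc
      · exfalso
        have e1 : ht w' p = 1 := by
          have := hle' p; have := hw'.ub p; omega
        have e2 : ht w' (p+1) = 1 := by omega
        have := hw'.no_flat (show p < n by omega) (by omega)
        omega
  have hp2 : ht w (p+2) = 0 := by
    rcases hv with hv | hv
    · rcases (show ht w (p+2) = -1 ∨ ht w (p+2) = 0 by omega) with hc | hc
      · exfalso
        have := hw.no_flat (show p+1 < n by omega)
          (by rw [show p+1+1 = p+2 from by omega]; omega)
        omega
      · exact hc
    · rcases (show ht w (p+2) = 0 ∨ ht w (p+2) = 1 by omega) with hc | hc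
      · exact hc
      · exfalso
        have e1 : ht w' (p+2) = 1 := by
          have := hle' (p+2); have := hw'.ub (p+2); omega
        have e2 : ht w' (p+1) = 1 := by omega
        have := hw'.no_flat (show p+1 < n by omega)
          (by rw [show p+1+1 = p+2 from by omega]; omega)
        omega
  -- letters
  have hlenw : w.length = n := hw.1
  obtain ⟨s1, hs1⟩ := exists_get? (show p < w.length by omega)
  obtain ⟨s2, hs2⟩ := exists_get? (show p+1 < w.length by omega)
  have e1 := ht_succ hs1
  have e2 := ht_succ hs2
  rw [show p+1+1 = p+2 from by omega] at e2
  have hpat : (w[p]? = some Step.D ∧ w[(p+1)]? = some Step.U) ∨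
      (w[p]? = some Step.H ∧ w[(p+1)]? = some Step.H) := by
    rcases hv with hv | hv
    · left
      constructor
      · have : sval s1 = -1 := by omega
        have := sval_inj (t := Step.D) (by simpa [sval] using this)
        rwa [this] at hs1
      · have : sval s2 = 1 := by omega
        have := sval_inj (t := Step.U) (by simpa [sval] using this)
        rwa [this] at hs2
    · right
      constructor
      · have : sval s1 = 0 := by omega
        have := sval_inj (t := Step.H) (by simpa [sval] using this)
        rwa [this] at hs1
      · have : sval s2 = 0 := by omega
        have := sval_inj (t := Step.H) (by simpa [sval] using this)
        rwa [this] at hs2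
  have hgood : GoodAt n w p := ⟨hw, by omega, hp0, hpat⟩
  refine ⟨p, hgood, ?_⟩
  -- w' must equal the bump
  have hzgf := bump_isGF hgood
  have hwz : PathLt w (bump w p) ∧ PathLt (bump w p) w' → False := hmin _ hzgf
  have hltwz : PathLt w (bump w p) := (covers_of_good hgood).2.2.1
  have hlezw' : PathLe (bump w p) w' := by
    intro j
    show ht (bump w p) j ≤ ht w' j
    rw [ht_bump hgood]
    rcases eq_or_ne j (p+1) with rfl | hne
    · rw [if_pos rfl]; omega
    · rw [if_neg hne]; have := hle' j; omega
  have hw'le : PathLe w' (bump w p) := by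
    by_contra hc
    exact hwz ⟨hltwz, hlezw', hc⟩
  symm
  apply eq_of_ht_eq (by rw [hzgf.1, hw'.1])
  intro j
  exact le_antisymm (hlezw' j) (hw'le j)

-- ## finiteness

instance : Fintype Step := ⟨{Step.U, Step.D, Step.H}, fun x => by cases x <;> simp⟩

instance gfFinite (n : ℕ) : Finite {w : List Step // IsGrandFibonacci n w} := by
  have hfin : {l : List Step | l.length = n}.Finite := List.finite_length_eq Step n
  haveI : Finite {l : List Step // l.length = n} := hfin.to_subtype
  apply Finite.of_injective
    (fun w => (⟨w.1, w.2.1⟩ : {l : List Step // l.length = n}))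
  intro a b hab
  simp only [Subtype.mk.injEq] at hab
  exact Subtype.ext hab

-- ## the bijection between covers and good positions

lemma card_covers_eq_card_good (n : ℕ) :
    grandFibonacciEdges n = Nat.card {q : List Step × ℕ // GoodAt n q.1 q.2} := by
  apply Nat.card_congr
  apply Equiv.symm
  apply Equiv.ofBijective
    (fun q : {q : List Step × ℕ // GoodAt n q.1 q.2} =>
      (⟨(q.1.1, bump q.1.1 q.1.2), covers_of_good q.2⟩ :
        {p : List Step × List Step // Covers (IsGrandFibonacci n) p.1 p.2}))
  constructor
  · rintro ⟨⟨w, p⟩, hp⟩ ⟨⟨w', p'⟩, hp'⟩ h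
    simp only [Subtype.mk.injEq, Prod.mk.injEq] at h
    obtain ⟨rfl, hb⟩ := h
    have : p = p' := by
      by_contra hne
      have e1 : ht (bump w p) (p+1) = ht w (p+1) + 1 := by
        rw [ht_bump hp, if_pos rfl]
      have e2 : ht (bump w p') (p+1) = ht w (p+1) := by
        rw [ht_bump hp', if_neg (by omega)]
        exact add_zero _
      rw [hb] at e1
      omega
    subst this
    rfl
  · rintro ⟨⟨w, w'⟩, hc⟩
    obtain ⟨p, hg, hb⟩ := good_of_covers hc
    exact ⟨⟨(w, p), hg⟩, by simp [← hb]⟩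

-- ## trivial small cases

lemma edges_eq_zero_of_le_one {n : ℕ} (hn : n ≤ 1) : grandFibonacciEdges n = 0 := by
  rw [card_covers_eq_card_good]
  have : IsEmpty {q : List Step × ℕ // GoodAt n q.1 q.2} := by
    constructor
    rintro ⟨⟨w, p⟩, _, hpn, _⟩
    omega
  exact Nat.card_of_isEmpty

-- ## splitting a good position

def GF (n : ℕ) := {w : List Step // IsGrandFibonacci n w}

noncomputable def A (n : ℕ) : ℕ := Nat.card (GF n)

instance (n : ℕ) : Finite (GF n) := gfFinite n

lemma GoodAt.take_isGF {n w p} (h : GoodAt n w p) : IsGrandFibonacci p (w.take p) :=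
  h.1.take (by have := h.2.1; omega) h.2.2.1

lemma GoodAt.drop_isGF {n w p} (h : GoodAt n w p) :
    IsGrandFibonacci (n - (p+2)) (w.drop (p+2)) := h.1.drop h.ht_p2

lemma glue_goodAt {m p : ℕ} (hp : p ≤ m) {u v : List Step} {a b : Step}
    (hu : IsGrandFibonacci p u) (hv : IsGrandFibonacci (m - p) v)
    (hab : IsGrandFibonacci 2 [a, b]) :
    IsGrandFibonacci (m + 2) (u ++ [a, b] ++ v) ∧
      (u ++ [a, b] ++ v)[p]? = some a ∧ (u ++ [a, b] ++ v)[(p+1)]? = some b ∧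
      ht (u ++ [a, b] ++ v) p = 0 := by
  have hul : u.length = p := hu.1
  have hgf : IsGrandFibonacci (m + 2) (u ++ [a, b] ++ v) := by
    have := (hu.glue hab).glue hv
    have harith : p + 2 + (m - p) = m + 2 := by omega
    rwa [harith] at this
  refine ⟨hgf, ?_, ?_, ?_⟩
  · rw [List.append_assoc, List.getElem?_append_right (by omega), hul]
    simp
  · rw [List.append_assoc, List.getElem?_append_right (by omega), hul]
    simp [show p + 1 - p = 1 by omega]
  · rw [ht_sandwich v hul (by rfl)]
    have h1 : ht u p = 0 := by
      rw [ht_of_length_le u (by omega)]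
      exact height_eq_zero_iff.mp hu.2.1
    have h2 : p - p = 0 := by omega
    rw [h1, h2, ht_zero, ht_zero]
    ring

lemma take_glue {u v x : List Step} {p : ℕ} (hul : u.length = p) :
    (u ++ x ++ v).take p = u := by
  rw [List.append_assoc, ← hul, List.take_left]

lemma drop_glue {u v : List Step} {a b : Step} {p : ℕ} (hul : u.length = p) :
    (u ++ [a, b] ++ v).drop (p + 2) = v := by
  rw [List.append_assoc]
  have : (u ++ ([a, b] ++ v)).drop (p + 2) = ([a, b] ++ v).drop 2 := by
    have h2 : p + 2 = u.length + 2 := by omega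
    rw [h2, List.drop_append]; simp
  rw [this]
  rfl

noncomputable def splitFun {m : ℕ} (p : ℕ)
    (w : {w : List Step // GoodAt (m+2) w p}) :
    (GF p × GF (m - p)) ⊕ (GF p × GF (m - p)) :=
  if w.1[p]? = some Step.D
  then Sum.inl (⟨w.1.take p, w.2.take_isGF⟩,
    ⟨w.1.drop (p+2), by have := w.2.drop_isGF; rwa [show m+2-(p+2) = m-p from by omega] at this⟩)
  else Sum.inr (⟨w.1.take p, w.2.take_isGF⟩,
    ⟨w.1.drop (p+2), by have := w.2.drop_isGF; rwa [show m+2-(p+2) = m-p from by omega] at this⟩)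

lemma card_goodAt {m : ℕ} (p : ℕ) (hp : p ≤ m) :
    Nat.card {w : List Step // GoodAt (m+2) w p} = 2 * (A p * A (m - p)) := by
  have hbij : Function.Bijective (splitFun (m := m) p) := by
    constructor
    · rintro ⟨w, hw⟩ ⟨w', hw'⟩ h
      apply Subtype.ext
      show w = w'
      by_cases hD : w[p]? = some Step.D <;> by_cases hD' : w'[p]? = some Step.D
      · rw [splitFun, splitFun, if_pos hD, if_pos hD'] at h
        simp only [Sum.inl.injEq, Prod.mk.injEq] at h
        have htk : w.take p = w'.take p := congrArg Subtype.val (Prod.ext_iff.mp h).1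
        have hdr : w.drop (p+2) = w'.drop (p+2) := congrArg Subtype.val (Prod.ext_iff.mp h).2
        clear h
        obtain ⟨-, -, -, ⟨h1, h2⟩ | ⟨h1, -⟩⟩ := hw
        · obtain ⟨-, -, -, ⟨h1', h2'⟩ | ⟨h1', -⟩⟩ := hw'
          · rw [two_letter_decomp h1 h2, two_letter_decomp h1' h2', htk, hdr]
          · rw [h1'] at hD'; simp at hD'
        · rw [h1] at hD; simp at hD
      · rw [splitFun, splitFun, if_pos hD, if_neg hD'] at h
        simp at h
      · rw [splitFun, splitFun, if_neg hD, if_pos hD'] at h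
        simp at h
      · rw [splitFun, splitFun, if_neg hD, if_neg hD'] at h
        simp only [Sum.inr.injEq, Prod.mk.injEq] at h
        have htk : w.take p = w'.take p := congrArg Subtype.val (Prod.ext_iff.mp h).1
        have hdr : w.drop (p+2) = w'.drop (p+2) := congrArg Subtype.val (Prod.ext_iff.mp h).2
        clear h
        obtain ⟨-, -, -, ⟨h1, -⟩ | ⟨h1, h2⟩⟩ := hw
        · rw [h1] at hD; simp at hD
        · obtain ⟨-, -, -, ⟨h1', -⟩ | ⟨h1', h2'⟩⟩ := hw'
          · rw [h1'] at hD'; simp at hD'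
          · rw [two_letter_decomp h1 h2, two_letter_decomp h1' h2', htk, hdr]
    · rintro (⟨⟨u, hu⟩, ⟨v, hv⟩⟩ | ⟨⟨u, hu⟩, ⟨v, hv⟩⟩)
      · obtain ⟨hgf, hga, hgb, hh0⟩ := glue_goodAt hp hu hv isGF_DU
        have hgood : GoodAt (m+2) (u ++ [Step.D, Step.U] ++ v) p :=
          ⟨hgf, by omega, hh0, Or.inl ⟨hga, hgb⟩⟩
        refine ⟨⟨u ++ [Step.D, Step.U] ++ v, hgood⟩, ?_⟩
        rw [splitFun, if_pos hga]
        congr 1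
        refine Prod.ext (Subtype.ext ?_) (Subtype.ext ?_)
        · exact take_glue hu.1
        · exact drop_glue hu.1
      · obtain ⟨hgf, hga, hgb, hh0⟩ := glue_goodAt hp hu hv isGF_HH
        have hgood : GoodAt (m+2) (u ++ [Step.H, Step.H] ++ v) p :=
          ⟨hgf, by omega, hh0, Or.inr ⟨hga, hgb⟩⟩
        refine ⟨⟨u ++ [Step.H, Step.H] ++ v, hgood⟩, ?_⟩
        rw [splitFun, if_neg (by rw [hga]; simp)]
        congr 1
        refine Prod.ext (Subtype.ext ?_) (Subtype.ext ?_)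
        · exact take_glue hu.1
        · exact drop_glue hu.1
  rw [Nat.card_congr (Equiv.ofBijective _ hbij)]
  haveI : Finite (GF p × GF (m - p)) := inferInstance
  rw [Nat.card_sum, Nat.card_prod]
  show A p * A (m-p) + A p * A (m-p) = _
  ring

-- ## edges as a sum

lemma card_edges_sum (m : ℕ) :
    grandFibonacciEdges (m+2) = ∑ p ∈ Finset.range (m+1), 2 * (A p * A (m - p)) := by
  rw [card_covers_eq_card_good]
  have e1 : {q : List Step × ℕ // GoodAt (m+2) q.1 q.2} ≃
      Σ p : Fin (m+1), {w : List Step // GoodAt (m+2) w p} :=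
    { toFun := fun q => ⟨⟨q.1.2, by have := q.2.2.1; omega⟩, ⟨q.1.1, q.2⟩⟩
      invFun := fun x => ⟨(x.2.1, x.1.1), x.2.2⟩
      left_inv := fun q => rfl
      right_inv := fun x => rfl }
  rw [Nat.card_congr e1]
  haveI : ∀ p : Fin (m+1), Finite {w : List Step // GoodAt (m+2) w p} := by
    intro p
    apply Finite.of_injective
      (fun w => (⟨w.1, w.2.1⟩ : GF (m+2)))
    intro a b hab
    simp only [Subtype.mk.injEq] at hab
    exact Subtype.ext hab
  haveI : ∀ p : Fin (m+1), Fintype {w : List Step // GoodAt (m+2) w p} := by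
    intro p
    exact Fintype.ofFinite _
  rw [Nat.card_eq_fintype_card, Fintype.card_sigma]
  rw [← Fin.sum_univ_eq_sum_range (fun p => 2 * (A p * A (m - p))) (m+1)]
  apply Finset.sum_congr rfl
  intro p _
  rw [← Nat.card_eq_fintype_card]
  exact card_goodAt p.1 (by omega)

-- ## the recurrence for A

lemma isGF_nil : IsGrandFibonacci 0 [] := by
  refine ⟨rfl, rfl, ?_, ?_⟩
  · intro i; simp [height]
  · intro i hi; simp at hi

lemma isGF_H : IsGrandFibonacci 1 [Step.H] := by
  refine ⟨rfl, rfl, ?_, ?_⟩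
  · intro i
    cases i with
    | zero => simp [height]
    | succ k => simp [height, List.take_of_length_le (show ([Step.H]:List Step).length ≤ k+1 by simp)]
  · intro i hi
    have : i < 1 := by
      obtain ⟨hl, -⟩ := List.getElem?_eq_some_iff.mp hi
      simpa using hl
    interval_cases i
    simp [height]

lemma one_letter_decomp {w : List Step} {p : ℕ} {a : Step}
    (ha : w[p]? = some a) : w = w.take p ++ [a] ++ w.drop (p+1) := by
  have hp : p < w.length := (List.getElem?_eq_some_iff.mp ha).1
  have e1 : w.drop p = a :: w.drop (p+1) := by
    rw [List.drop_eq_getElem_cons hp]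
    congr 1
    obtain ⟨h, hget⟩ := List.getElem?_eq_some_iff.mp ha
    simpa [List.getElem?_eq_getElem h] using ha
  conv_lhs => rw [← List.take_append_drop p w, e1]
  simp

noncomputable def recFun (n : ℕ) :
    (GF (n+1) ⊕ (GF n ⊕ GF n)) → GF (n+2) := fun x =>
  match x with
  | Sum.inl t => ⟨[Step.H] ++ t.1, by
      have := isGF_H.glue t.2
      rwa [show 1 + (n+1) = n+2 from by omega] at this⟩
  | Sum.inr (Sum.inl t) => ⟨[Step.U, Step.D] ++ t.1, by
      have := isGF_UD.glue t.2
      rwa [show 2 + n = n+2 from by omega] at this⟩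
  | Sum.inr (Sum.inr t) => ⟨[Step.D, Step.U] ++ t.1, by
      have := isGF_DU.glue t.2
      rwa [show 2 + n = n+2 from by omega] at this⟩

lemma A_rec (n : ℕ) : A (n+2) = A (n+1) + 2 * A n := by
  have hbij : Function.Bijective (recFun n) := by
    constructor
    · rintro x y h
      have hval : (recFun n x).1 = (recFun n y).1 := congrArg Subtype.val h
      rcases x with ⟨t, ht'⟩ | ⟨t, ht'⟩ | ⟨t, ht'⟩ <;>
        rcases y with ⟨s, hs'⟩ | ⟨s, hs'⟩ | ⟨s, hs'⟩ <;>
        simp only [recFun, List.cons_append, List.nil_append, List.cons.injEq,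
          true_and, reduceCtorEq, false_and, and_false] at hval
      · exact congrArg Sum.inl (Subtype.ext hval)
      · exact congrArg (fun z => Sum.inr (Sum.inl z)) (Subtype.ext hval)
      · exact congrArg (fun z => Sum.inr (Sum.inr z)) (Subtype.ext hval)
    · rintro ⟨w, hw⟩
      have hlen : w.length = n + 2 := hw.1
      obtain ⟨s1, hs1⟩ := exists_get? (show 0 < w.length by omega)
      have h1 : ht w 1 = sval s1 := by
        rw [show (1:ℕ) = 0 + 1 from rfl, ht_succ hs1, ht_zero]; ring
      cases s1 with
      | H =>
        have h10 : ht w 1 = 0 := by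
          rw [show (1:ℕ) = 0 + 1 from rfl, ht_succ hs1, ht_zero]
          simp [sval]
        have hdrop : IsGrandFibonacci (n+1) (w.drop 1) := by
          have := hw.drop h10
          rwa [show n+2-1 = n+1 from by omega] at this
        refine ⟨Sum.inl ⟨w.drop 1, hdrop⟩, ?_⟩
        apply Subtype.ext
        show [Step.H] ++ w.drop 1 = w
        conv_rhs => rw [one_letter_decomp hs1]
        simp
      | U =>
        obtain ⟨s2, hs2⟩ := exists_get? (show 1 < w.length by omega)
        have h2 : ht w 2 = sval Step.U + sval s2 := by
          rw [show (2:ℕ) = 1 + 1 from rfl, ht_succ hs2, h1]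
        have hs2D : s2 = Step.D := by
          cases s2 with
          | U => exfalso; have := hw.ub 2; simp [sval] at h2; omega
          | D => rfl
          | H => exfalso; have := hw.hcond hs2; simp [sval] at h1; omega
        subst hs2D
        have h20 : ht w 2 = 0 := by simp [sval] at h2; omega
        have hdrop : IsGrandFibonacci n (w.drop 2) := by
          have := hw.drop h20
          rwa [show n+2-2 = n from by omega] at this
        refine ⟨Sum.inr (Sum.inl ⟨w.drop 2, hdrop⟩), ?_⟩
        apply Subtype.ext
        show [Step.U, Step.D] ++ w.drop 2 = w
        conv_rhs => rw [two_letter_decomp hs1 hs2]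
        simp
      | D =>
        obtain ⟨s2, hs2⟩ := exists_get? (show 1 < w.length by omega)
        have h2 : ht w 2 = sval Step.D + sval s2 := by
          rw [show (2:ℕ) = 1 + 1 from rfl, ht_succ hs2, h1]
        have hs2U : s2 = Step.U := by
          cases s2 with
          | D => exfalso; have := hw.lb 2; simp [sval] at h2; omega
          | U => rfl
          | H => exfalso; have := hw.hcond hs2; simp [sval] at h1; omega
        subst hs2U
        have h20 : ht w 2 = 0 := by simp [sval] at h2; omega
        have hdrop : IsGrandFibonacci n (w.drop 2) := by
          have := hw.drop h20
          rwa [show n+2-2 = n from by omega] at this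
        refine ⟨Sum.inr (Sum.inr ⟨w.drop 2, hdrop⟩), ?_⟩
        apply Subtype.ext
        show [Step.D, Step.U] ++ w.drop 2 = w
        conv_rhs => rw [two_letter_decomp hs1 hs2]
        simp
  have := Nat.card_congr (Equiv.ofBijective _ hbij)
  rw [Nat.card_sum, Nat.card_sum] at this
  have e2 : A (n+1) + (A n + A n) = A (n+2) := this
  omega

lemma A_zero : A 0 = 1 := by
  haveI : Unique (GF 0) := by
    refine ⟨⟨⟨[], isGF_nil⟩⟩, ?_⟩
    rintro ⟨w, hw⟩
    apply Subtype.ext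
    exact List.eq_nil_of_length_eq_zero hw.1
  exact Nat.card_unique

lemma A_one : A 1 = 1 := by
  haveI : Unique (GF 1) := by
    refine ⟨⟨⟨[Step.H], isGF_H⟩⟩, ?_⟩
    rintro ⟨w, hw⟩
    apply Subtype.ext
    obtain ⟨s, rfl⟩ := List.length_eq_one_iff.mp hw.1
    have := hw.2.1
    cases s with
    | U => simp [List.count_cons] at this
    | D => simp [List.count_cons] at this
    | H => rfl
  exact Nat.card_unique

lemma A_closed (k : ℕ) : 3 * (A k : ℤ) = 2^(k+1) + (-1)^k := by
  induction k using Nat.strong_induction_on with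
  | _ k ih =>
    match k with
    | 0 => rw [A_zero]; norm_num
    | 1 => rw [A_one]; norm_num
    | (k+2) =>
      have i1 := ih k (by omega)
      have i2 := ih (k+1) (by omega)
      have p1 : (2:ℤ)^(k+1) = 2^k * 2 := pow_succ 2 k
      have p2 : (2:ℤ)^(k+2) = 2^k * 4 := by rw [pow_succ, p1]; ring
      have p3 : (2:ℤ)^(k+3) = 2^k * 8 := by rw [pow_succ, p2]; ring
      have q1 : (-1:ℤ)^(k+1) = -(-1)^k := by rw [pow_succ]; ring
      have q2 : (-1:ℤ)^(k+2) = (-1)^k := by rw [pow_succ, q1]; ring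
      rw [A_rec]
      push_cast
      rw [show k+2+1 = k+3 from rfl, p3, q2]
      rw [p1] at i1
      rw [p2, q1] at i2
      linarith [i1, i2]

-- ## sum identities

lemma T_sum (m : ℕ) :
    3 * ∑ p ∈ Finset.range (m+1), 2^(p+1) * (-1:ℤ)^(m-p) = 2^(m+2) + 2*(-1)^m := by
  induction m with
  | zero => norm_num
  | succ m ih =>
    rw [Finset.sum_range_succ]
    have hcongr : ∀ p ∈ Finset.range (m+1), 2^(p+1) * (-1:ℤ)^(m+1-p) =
        -(2^(p+1) * (-1:ℤ)^(m-p)) := by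
      intro p hp
      rw [Finset.mem_range] at hp
      rw [show m+1-p = (m-p)+1 from by omega, pow_succ]
      ring
    rw [Finset.sum_congr rfl hcongr, Finset.sum_neg_distrib]
    have e1 : m+1-(m+1) = 0 := by omega
    rw [e1]
    have p2 : (2:ℤ)^(m+1+2) = 2^(m+2)*2 := by rw [← pow_succ]
    have q1 : (-1:ℤ)^(m+1) = -(-1)^m := by rw [pow_succ]; ring
    rw [p2, q1]
    linarith [ih]

lemma G_sum (m : ℕ) :
    3 * ∑ p ∈ Finset.range (m+1), (2^(p+1) + (-1:ℤ)^p) * (2^(m-p+1) + (-1)^(m-p)) =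
      (3*m+5) * 2^(m+2) + (3*m+7) * (-1)^m := by
  have hterm : ∀ p ∈ Finset.range (m+1),
      (2^(p+1) + (-1:ℤ)^p) * (2^(m-p+1) + (-1)^(m-p)) =
        2^(m+2) + (-1)^m + (2^(p+1) * (-1)^(m-p) + (-1)^p * 2^(m-p+1)) := by
    intro p hp
    rw [Finset.mem_range] at hp
    have e1 : (2:ℤ)^(p+1) * 2^(m-p+1) = 2^(m+2) := by
      rw [← pow_add]
      congr 1
      omega
    have e2 : (-1:ℤ)^p * (-1)^(m-p) = (-1)^m := by
      rw [← pow_add]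
      congr 1
      omega
    calc (2^(p+1) + (-1:ℤ)^p) * (2^(m-p+1) + (-1)^(m-p))
        = 2^(p+1) * 2^(m-p+1) + (-1:ℤ)^p * (-1)^(m-p)
            + (2^(p+1) * (-1)^(m-p) + (-1)^p * 2^(m-p+1)) := by ring
      _ = _ := by rw [e1, e2]
  rw [Finset.sum_congr rfl hterm, Finset.sum_add_distrib, Finset.sum_add_distrib,
    Finset.sum_add_distrib, Finset.sum_const, Finset.sum_const, Finset.card_range]
  simp only [nsmul_eq_mul]
  have hrefl : ∑ p ∈ Finset.range (m+1), (-1:ℤ)^p * 2^(m-p+1) =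
      ∑ p ∈ Finset.range (m+1), 2^(p+1) * (-1:ℤ)^(m-p) := by
    rw [← Finset.sum_range_reflect]
    apply Finset.sum_congr rfl
    intro p hp
    rw [Finset.mem_range] at hp
    rw [show m+1-1-p = m-p from by omega, show m-(m-p) = p from by omega]
    ring
  rw [hrefl]
  have hT := T_sum m
  push_cast
  linarith [hT]


/-- The number of edges of the Hasse diagram of the Grand Fibonacci poset `GF_n`
satisfies `27·ℓ(GF_n) = (3n-1)·2^{n+1} + 2·(3n+1)·(-1)^n` (as integers). -/
theorem grandFibonacciEdges_eq (n : ℕ) :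
    27 * (grandFibonacciEdges n : ℤ) =
      (3 * n - 1) * 2 ^ (n + 1) + 2 * (3 * n + 1) * (-1) ^ n := by
  match n with
  | 0 =>
    rw [edges_eq_zero_of_le_one (by omega)]
    norm_num
  | 1 =>
    rw [edges_eq_zero_of_le_one (by omega)]
    norm_num
  | (m+2) =>
    rw [card_edges_sum m]
    push_cast
    rw [Finset.mul_sum]
    have hterm : ∀ p ∈ Finset.range (m+1),
        (27:ℤ) * (2 * ((A p : ℤ) * (A (m-p) : ℤ))) =
          6 * ((2^(p+1) + (-1:ℤ)^p) * (2^(m-p+1) + (-1)^(m-p))) := by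
      intro p hp
      have c1 := A_closed p
      have c2 := A_closed (m-p)
      nlinarith [c1, c2]
    rw [Finset.sum_congr rfl hterm, ← Finset.mul_sum]
    have hG := G_sum m
    have p1 : (2:ℤ)^(m+2+1) = 2^(m+2)*2 := by rw [← pow_succ]
    have q1 : (-1:ℤ)^(m+2) = (-1)^m := by rw [pow_succ, pow_succ]; ring
    push_cast
    rw [p1, q1]
    linarith [hG]
end
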